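/- arXiv:2502.04551 — 3 statements merged into one kernel-verified Lean document; each statement's English description precedes it below -/
import Mathlib

section
/- Consider the cascade of two discrete-time systems on ℝⁿ: x^{(t+1)} = f(x^{(t)}) with initial condition x^{(0)} = ξ, and e^{(t+1)} = g(e^{(t)}, x^{(t)}) with initial condition e^{(0)} = η, where f(0) = 0 and g(0,0) = 0. Suppose there exists a class-KL function β₁ such that every solution of the x-system satisfies ‖x^{(t)}(ξ)‖ ≤ β₁(‖ξ‖, t) for all t ∈ ℕ, and there exist a class-KL function β₂ and a class-K function γ such that every solution of the e-system satisfies ‖e^{(t)}‖ ≤ β₂(‖η‖, t) + γ(‖x^{(t)}‖) for all t ∈ ℕ. Then the origin of the cascade system is globally asymptotically stable: the function β(r,t) = β₁(r,t) + β₂(r,t) + γ(β₁(r,t)) is a class-KL function and the concatenated state s^{(t)} = (x^{(t)}, e^{(t)}) ∈ ℝⁿ × ℝⁿ satisfies ‖s^{(t)}‖ ≤ β(‖(ξ,η)‖, t) for all t ∈ ℕ, where ‖(x,e)‖ = √(‖x‖² + ‖e‖²) denotes the Euclidean norm on ℝⁿ × ℝⁿ. -/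
open Filter Topology

/-- A class-K function: a continuous function `α : ℝ≥0 → ℝ≥0` (modelled as a real function
on `[0,∞)`) that is strictly increasing and satisfies `α 0 = 0`. -/
def IsClassK (α : ℝ → ℝ) : Prop :=
  ContinuousOn α (Set.Ici 0) ∧ StrictMonoOn α (Set.Ici 0) ∧ α 0 = 0 ∧
    ∀ r, 0 ≤ r → 0 ≤ α r

/-- A class-K∞ function: a class-K function with `α r → ∞` as `r → ∞`. -/
def IsClassKInf (α : ℝ → ℝ) : Prop :=
  IsClassK α ∧ Tendsto α atTop atTop

/-- A class-KL function: a continuous function `β : ℝ≥0 × ℝ≥0 → ℝ≥0` such that for each fixed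
`t`, `r ↦ β r t` is class-K, and for each fixed `r`, `t ↦ β r t` is decreasing and tends
to `0` as `t → ∞`. -/
def IsClassKL (β : ℝ → ℝ → ℝ) : Prop :=
  ContinuousOn (Function.uncurry β) (Set.Ici 0 ×ˢ Set.Ici 0) ∧
  (∀ t, 0 ≤ t → IsClassK fun r => β r t) ∧
  (∀ r, 0 ≤ r → AntitoneOn (fun t => β r t) (Set.Ici 0)) ∧
  (∀ r, 0 ≤ r → Tendsto (fun t => β r t) atTop (𝓝 0))

/-- Cascade of `x⁺ = f x` and `e⁺ = g e x` on ℝⁿ: if the `x`-system admits a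
class-KL bound `β₁` and the `e`-system admits an ISS bound `β₂, γ` in terms of the current state,
then `β(r,t) = β₁(r,t) + β₂(r,t) + γ(β₁(r,t))` is class-KL and bounds the Euclidean norm of the
concatenated state `(x, e)`. -/
theorem cascade_globally_asymptotically_stable {n : ℕ}
    (f : EuclideanSpace ℝ (Fin n) → EuclideanSpace ℝ (Fin n))
    (g : EuclideanSpace ℝ (Fin n) → EuclideanSpace ℝ (Fin n) → EuclideanSpace ℝ (Fin n))
    (hf0 : f 0 = 0) (hg0 : g 0 0 = 0)
    (β₁ β₂ : ℝ → ℝ → ℝ) (γ : ℝ → ℝ)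
    (hβ₁ : IsClassKL β₁) (hβ₂ : IsClassKL β₂) (hγ : IsClassK γ)
    (hx : ∀ (ξ : EuclideanSpace ℝ (Fin n)) (x : ℕ → EuclideanSpace ℝ (Fin n)),
      x 0 = ξ → (∀ t, x (t + 1) = f (x t)) → ∀ t : ℕ, ‖x t‖ ≤ β₁ ‖ξ‖ t)
    (he : ∀ (ξ η : EuclideanSpace ℝ (Fin n)) (x e : ℕ → EuclideanSpace ℝ (Fin n)),
      x 0 = ξ → e 0 = η → (∀ t, x (t + 1) = f (x t)) → (∀ t, e (t + 1) = g (e t) (x t)) →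
      ∀ t : ℕ, ‖e t‖ ≤ β₂ ‖η‖ t + γ ‖x t‖) :
    IsClassKL (fun r t => β₁ r t + β₂ r t + γ (β₁ r t)) ∧
    ∀ (ξ η : EuclideanSpace ℝ (Fin n)) (x e : ℕ → EuclideanSpace ℝ (Fin n)),
      x 0 = ξ → e 0 = η → (∀ t, x (t + 1) = f (x t)) → (∀ t, e (t + 1) = g (e t) (x t)) →
      ∀ t : ℕ, Real.sqrt (‖x t‖ ^ 2 + ‖e t‖ ^ 2) ≤
        β₁ (Real.sqrt (‖ξ‖ ^ 2 + ‖η‖ ^ 2)) t + β₂ (Real.sqrt (‖ξ‖ ^ 2 + ‖η‖ ^ 2)) t +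
          γ (β₁ (Real.sqrt (‖ξ‖ ^ 2 + ‖η‖ ^ 2)) t) := by

  obtain ⟨h1c, h1k, h1a, h1t⟩ := hβ₁
  obtain ⟨h2c, h2k, h2a, h2t⟩ := hβ₂
  obtain ⟨hγc, hγm, hγ0, hγn⟩ := hγ
  constructor
  · refine ⟨?_, ?_, ?_, ?_⟩
    · have hmaps : Set.MapsTo (Function.uncurry β₁) (Set.Ici 0 ×ˢ Set.Ici 0) (Set.Ici 0) :=
        fun p hp => Set.mem_Ici.2 ((h1k p.2 hp.2).2.2.2 p.1 hp.1)
      have := (h1c.add h2c).add (hγc.comp h1c hmaps)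
      convert this using 1
      rfl
    · intro t ht
      refine ⟨?_, ?_, ?_, ?_⟩
      · have hmaps : Set.MapsTo (fun r => β₁ r t) (Set.Ici 0) (Set.Ici 0) :=
          fun r hr => Set.mem_Ici.2 ((h1k t ht).2.2.2 r hr)
        exact (((h1k t ht).1.add (h2k t ht).1).add (hγc.comp (h1k t ht).1 hmaps))
      · intro a ha b hb hab
        have s1 := (h1k t ht).2.1 ha hb hab
        have s2 := (h2k t ht).2.1 ha hb hab
        have s3 := hγm (Set.mem_Ici.2 ((h1k t ht).2.2.2 a ha))
          (Set.mem_Ici.2 ((h1k t ht).2.2.2 b hb)) s1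
        dsimp only
        linarith
      · simp [(h1k t ht).2.2.1, (h2k t ht).2.2.1, hγ0]
      · intro r hr
        have n1 := (h1k t ht).2.2.2 r hr
        have n2 := (h2k t ht).2.2.2 r hr
        have n3 := hγn _ n1
        dsimp only at *
        linarith
    · intro r hr a ha b hb hab
      have s1 := h1a r hr ha hb hab
      have s2 := h2a r hr ha hb hab
      have s3 := hγm.monotoneOn (Set.mem_Ici.2 ((h1k b hb).2.2.2 r hr))
        (Set.mem_Ici.2 ((h1k a ha).2.2.2 r hr)) s1
      dsimp only
      linarith
    · intro r hr
      have h1 := h1t r hr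
      have h2 := h2t r hr
      have h3 : Tendsto (fun t => γ (β₁ r t)) atTop (𝓝 0) := by
        have hc : ContinuousWithinAt γ (Set.Ici 0) 0 := hγc 0 (Set.self_mem_Ici)
        have hin : Tendsto (fun t => β₁ r t) atTop (𝓝[Set.Ici 0] 0) := by
          rw [tendsto_nhdsWithin_iff]
          refine ⟨h1, Filter.eventually_atTop.2 ⟨0, fun t htt => ?_⟩⟩
          exact Set.mem_Ici.2 ((h1k t htt).2.2.2 r hr)
        have := hc.tendsto.comp hin
        rwa [hγ0] at this
      have := (h1.add h2).add h3
      simpa using this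
  · intro ξ η x e hx0 he0 hxs hes t
    set s := Real.sqrt (‖ξ‖ ^ 2 + ‖η‖ ^ 2) with hs
    have hs0 : 0 ≤ s := Real.sqrt_nonneg _
    have ht0 : (0:ℝ) ≤ (t:ℝ) := Nat.cast_nonneg t
    have hξs : ‖ξ‖ ≤ s := by
      have h := Real.sqrt_le_sqrt (le_add_of_nonneg_right (sq_nonneg ‖η‖) :
        ‖ξ‖ ^ 2 ≤ ‖ξ‖ ^ 2 + ‖η‖ ^ 2)
      rwa [Real.sqrt_sq (norm_nonneg _)] at h
    have hηs : ‖η‖ ≤ s := by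
      have h := Real.sqrt_le_sqrt (le_add_of_nonneg_left (sq_nonneg ‖ξ‖) :
        ‖η‖ ^ 2 ≤ ‖ξ‖ ^ 2 + ‖η‖ ^ 2)
      rwa [Real.sqrt_sq (norm_nonneg _)] at h
    have hbx := hx ξ x hx0 hxs t
    have hbe := he ξ η x e hx0 he0 hxs hes t
    have m1 : β₁ ‖ξ‖ t ≤ β₁ s t :=
      ((h1k t ht0).2.1).monotoneOn (Set.mem_Ici.2 (norm_nonneg _)) (Set.mem_Ici.2 hs0) hξs
    have m2 : β₂ ‖η‖ t ≤ β₂ s t :=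
      ((h2k t ht0).2.1).monotoneOn (Set.mem_Ici.2 (norm_nonneg _)) (Set.mem_Ici.2 hs0) hηs
    have m3 : γ ‖x t‖ ≤ γ (β₁ s t) :=
      hγm.monotoneOn (Set.mem_Ici.2 (norm_nonneg _))
        (Set.mem_Ici.2 ((h1k t ht0).2.2.2 s hs0)) (hbx.trans m1)
    have hsq : Real.sqrt (‖x t‖ ^ 2 + ‖e t‖ ^ 2) ≤ ‖x t‖ + ‖e t‖ := by
      rw [show ‖x t‖ + ‖e t‖ = Real.sqrt ((‖x t‖ + ‖e t‖) ^ 2) from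
        (Real.sqrt_sq (by positivity)).symm]
      refine Real.sqrt_le_sqrt ?_
      nlinarith [norm_nonneg (x t), norm_nonneg (e t)]
    linarith
end

section
/- Let 𝒜 ∈ ℝ^{n×n} be Schur stable, i.e., every (complex) eigenvalue of 𝒜 has modulus strictly less than 1. Then for every symmetric positive definite matrix Q ∈ ℝ^{n×n} there exists a unique symmetric positive definite matrix P ∈ ℝ^{n×n} solving the discrete Lyapunov equation 𝒜ᵀ P 𝒜 − P + Q = 0, and it is given by the convergent series P = Σ_{k=0}^{∞} (𝒜ᵀ)^k Q 𝒜^k. -/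
open Matrix Filter Topology
open scoped NNReal ENNReal

/-- A real square matrix is Schur stable if every (complex) eigenvalue has modulus
strictly less than `1`, i.e. its spectral radius is `< 1`. -/
def SchurStable {n : ℕ} (M : Matrix (Fin n) (Fin n) ℝ) : Prop :=
  ∀ z ∈ spectrum ℂ (M.map (algebraMap ℝ ℂ)), ‖z‖ < 1

section Aux
attribute [local instance] Matrix.frobeniusSeminormedAddCommGroup
  Matrix.frobeniusNormedAddCommGroup Matrix.frobeniusNormedRing
  Matrix.frobeniusNormedAlgebra

variable {n : ℕ}

lemma schur_pow_norm_eventually (𝒜 : Matrix (Fin n) (Fin n) ℝ) (hA : SchurStable 𝒜) :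
    ∃ r : ℝ, 0 ≤ r ∧ r < 1 ∧ ∀ᶠ k in atTop, ‖𝒜 ^ k‖ ≤ r ^ k := by
  set A' : Matrix (Fin n) (Fin n) ℂ := 𝒜.map (algebraMap ℝ ℂ) with hA'
  have hρ : spectralRadius ℂ A' < 1 := by
    rcases Set.eq_empty_or_nonempty (spectrum ℂ A') with h | h
    · rw [spectralRadius]; simp [h]
    · have := spectrum.spectralRadius_lt_of_forall_lt_of_nonempty h (r := 1)
        (fun z hz => by
          have h1 := hA z hz
          exact_mod_cast h1)
      simpa using this
  obtain ⟨s, hs1, hs2⟩ := exists_between hρ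
  have hstop : s ≠ ⊤ := (hs2.trans_le le_top).ne
  set r : ℝ≥0 := s.toNNReal with hrdef
  have hsr : s = (r : ℝ≥0∞) := (ENNReal.coe_toNNReal hstop).symm
  have hr1 : r < 1 := by
    rw [hsr] at hs2; exact_mod_cast hs2
  have hGel := spectrum.pow_nnnorm_pow_one_div_tendsto_nhds_spectralRadius A'
  have hev : ∀ᶠ k : ℕ in atTop, (‖A' ^ k‖₊ : ℝ≥0∞) ^ (1 / (k : ℝ)) < s :=
    hGel.eventually_lt_const hs1
  refine ⟨r, r.coe_nonneg, by exact_mod_cast hr1, ?_⟩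
  filter_upwards [hev, eventually_ge_atTop 1] with k hk hk1
  have hk0 : (k : ℝ) ≠ 0 := by
    exact_mod_cast Nat.one_le_iff_ne_zero.mp hk1
  have hknorm : ‖𝒜 ^ k‖₊ = ‖A' ^ k‖₊ := by
    have hmap : A' ^ k = (𝒜 ^ k).map (algebraMap ℝ ℂ) := by
      simp only [hA', ← RingHom.mapMatrix_apply, ← map_pow]
    rw [hmap, Matrix.frobenius_nnnorm_map_eq]
    intro a
    simp
  have hle : (‖A' ^ k‖₊ : ℝ≥0∞) ≤ s ^ (k : ℝ) := by
    have h1 : (‖A' ^ k‖₊ : ℝ≥0∞) = ((‖A' ^ k‖₊ : ℝ≥0∞) ^ (1 / (k : ℝ))) ^ (k : ℝ) := by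
      rw [← ENNReal.rpow_mul, one_div_mul_cancel hk0, ENNReal.rpow_one]
    rw [h1]
    exact ENNReal.rpow_le_rpow hk.le (Nat.cast_nonneg k)
  rw [hsr, ENNReal.rpow_natCast, ← ENNReal.coe_pow, ENNReal.coe_le_coe, ← hknorm] at hle
  calc ‖𝒜 ^ k‖ = ((‖𝒜 ^ k‖₊ : ℝ≥0) : ℝ) := rfl
    _ ≤ ((r ^ k : ℝ≥0) : ℝ) := by exact_mod_cast hle
    _ = (r : ℝ) ^ k := by push_cast; ring

lemma schur_conj_bound (𝒜 : Matrix (Fin n) (Fin n) ℝ) (hA : SchurStable 𝒜) :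
    ∃ r : ℝ, 0 ≤ r ∧ r < 1 ∧ ∀ X : Matrix (Fin n) (Fin n) ℝ,
      ∀ᶠ k in atTop, ‖(𝒜ᵀ) ^ k * X * 𝒜 ^ k‖ ≤ ‖X‖ * r ^ k := by
  obtain ⟨r, hr0, hr1, hev⟩ := schur_pow_norm_eventually 𝒜 hA
  refine ⟨r ^ 2, by positivity, by nlinarith, fun X => ?_⟩
  filter_upwards [hev] with k hk
  have h1 : ‖(𝒜ᵀ) ^ k * X * 𝒜 ^ k‖ ≤ ‖𝒜 ^ k‖ * ‖X‖ * ‖𝒜 ^ k‖ := by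
    calc ‖(𝒜ᵀ) ^ k * X * 𝒜 ^ k‖ ≤ ‖(𝒜ᵀ) ^ k * X‖ * ‖𝒜 ^ k‖ := norm_mul_le _ _
      _ ≤ ‖(𝒜ᵀ) ^ k‖ * ‖X‖ * ‖𝒜 ^ k‖ := by
          gcongr
          exact norm_mul_le _ _
      _ = ‖𝒜 ^ k‖ * ‖X‖ * ‖𝒜 ^ k‖ := by
          rw [← Matrix.transpose_pow, Matrix.frobenius_norm_transpose]
  have h2 : ‖𝒜 ^ k‖ * ‖X‖ * ‖𝒜 ^ k‖ ≤ ‖X‖ * (r ^ 2) ^ k := by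
    have hn : (0:ℝ) ≤ ‖𝒜 ^ k‖ := norm_nonneg _
    have hX : (0:ℝ) ≤ ‖X‖ := norm_nonneg _
    have hrk : (0:ℝ) ≤ r ^ k := by positivity
    calc ‖𝒜 ^ k‖ * ‖X‖ * ‖𝒜 ^ k‖ ≤ r ^ k * ‖X‖ * r ^ k := by
          apply mul_le_mul (mul_le_mul hk le_rfl hX hrk) hk hn (by positivity)
      _ = ‖X‖ * (r ^ 2) ^ k := by ring
  linarith

lemma schur_summable (𝒜 : Matrix (Fin n) (Fin n) ℝ) (hA : SchurStable 𝒜)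
    (Q : Matrix (Fin n) (Fin n) ℝ) :
    Summable (fun k : ℕ => (𝒜ᵀ) ^ k * Q * 𝒜 ^ k) := by
  obtain ⟨r, hr0, hr1, hev⟩ := schur_conj_bound 𝒜 hA
  exact Summable.of_norm_bounded_eventually_nat (g := fun k => ‖Q‖ * r ^ k)
    ((summable_geometric_of_lt_one hr0 hr1).mul_left _) (hev Q)

lemma schur_tendsto_zero (𝒜 : Matrix (Fin n) (Fin n) ℝ) (hA : SchurStable 𝒜)
    (X : Matrix (Fin n) (Fin n) ℝ) :
    Tendsto (fun k : ℕ => (𝒜ᵀ) ^ k * X * 𝒜 ^ k) atTop (𝓝 0) := by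
  obtain ⟨r, hr0, hr1, hev⟩ := schur_conj_bound 𝒜 hA
  apply squeeze_zero_norm' (hev X)
  have := (tendsto_pow_atTop_nhds_zero_of_lt_one hr0 hr1).const_mul ‖X‖
  simpa using this

end Aux

/-- If `𝒜` is Schur stable, then for every symmetric positive definite `Q`
there is a unique symmetric positive definite `P` with `𝒜ᵀ P 𝒜 - P + Q = 0`, given by the
convergent series `P = ∑_{k=0}^∞ (𝒜ᵀ)^k Q 𝒜^k`. -/
theorem discrete_lyapunov_equation_solution {n : ℕ}
    (𝒜 : Matrix (Fin n) (Fin n) ℝ) (hA : SchurStable 𝒜)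
    (Q : Matrix (Fin n) (Fin n) ℝ) (hQ : Q.PosDef) :
    (∃! P : Matrix (Fin n) (Fin n) ℝ, P.PosDef ∧ 𝒜ᵀ * P * 𝒜 - P + Q = 0) ∧
    Summable (fun k : ℕ => (𝒜ᵀ) ^ k * Q * 𝒜 ^ k) ∧
    (∑' k : ℕ, (𝒜ᵀ) ^ k * Q * 𝒜 ^ k).PosDef ∧
    𝒜ᵀ * (∑' k : ℕ, (𝒜ᵀ) ^ k * Q * 𝒜 ^ k) * 𝒜 - (∑' k : ℕ, (𝒜ᵀ) ^ k * Q * 𝒜 ^ k) + Q = 0 := by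
  have hsum := schur_summable 𝒜 hA Q
  set f : ℕ → Matrix (Fin n) (Fin n) ℝ := fun k => (𝒜ᵀ) ^ k * Q * 𝒜 ^ k with hf
  set P : Matrix (Fin n) (Fin n) ℝ := ∑' k, f k with hP
  -- symmetry of Q
  have hct : ∀ M : Matrix (Fin n) (Fin n) ℝ, Mᴴ = Mᵀ := fun M => by
    ext i j; simp [Matrix.conjTranspose_apply]
  have hQsymm : Qᵀ = Q := by rw [← hct]; exact hQ.1
  -- symmetry of P
  have hPsymm : Pᵀ = P := by
    rw [hP, Matrix.transpose_tsum]
    refine tsum_congr fun k => ?_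
    simp [hf, Matrix.transpose_mul, Matrix.transpose_pow, hQsymm, mul_assoc]
  have hHerm : P.IsHermitian := by
    show Pᴴ = P
    rw [hct, hPsymm]
  -- quadratic form identity
  have hquad : ∀ (x : Fin n → ℝ) (k : ℕ),
      x ⬝ᵥ (f k) *ᵥ x = (𝒜 ^ k *ᵥ x) ⬝ᵥ Q *ᵥ (𝒜 ^ k *ᵥ x) := by
    intro x k
    rw [hf]
    show x ⬝ᵥ ((𝒜ᵀ) ^ k * Q * 𝒜 ^ k) *ᵥ x = _
    rw [mul_assoc, ← Matrix.mulVec_mulVec, Matrix.dotProduct_mulVec,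
      ← Matrix.transpose_pow, Matrix.vecMul_transpose, ← Matrix.mulVec_mulVec]
  -- the quadratic form as a continuous linear map in the matrix
  have hform : ∀ x : Fin n → ℝ,
      x ⬝ᵥ P *ᵥ x = ∑' k, x ⬝ᵥ (f k) *ᵥ x ∧ Summable (fun k => x ⬝ᵥ (f k) *ᵥ x) := by
    intro x
    let L : Matrix (Fin n) (Fin n) ℝ →ₗ[ℝ] ℝ :=
      { toFun := fun M => x ⬝ᵥ M *ᵥ x
        map_add' := fun M N => by simp [Matrix.add_mulVec, dotProduct_add]
        map_smul' := fun c M => by simp [Matrix.smul_mulVec, dotProduct_smul] }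
    let L' := L.toContinuousLinearMap
    constructor
    · exact L'.map_tsum hsum
    · exact hsum.map L' L'.continuous
  have hPos : P.PosDef := by
    refine Matrix.PosDef.of_dotProduct_mulVec_pos hHerm fun x hx => ?_
    rw [star_trivial]
    obtain ⟨hx1, hx2⟩ := hform x
    rw [hx1]
    have hterm0 : x ⬝ᵥ (f 0) *ᵥ x = x ⬝ᵥ Q *ᵥ x := by
      rw [hquad]; simp
    have hpos0 : 0 < x ⬝ᵥ (f 0) *ᵥ x := by
      rw [hterm0]
      have := hQ.dotProduct_mulVec_pos hx
      rwa [star_trivial] at this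
    have hnonneg : ∀ k, 0 ≤ x ⬝ᵥ (f k) *ᵥ x := by
      intro k
      rw [hquad]
      have := hQ.posSemidef.dotProduct_mulVec_nonneg (𝒜 ^ k *ᵥ x)
      rwa [star_trivial] at this
    calc (0:ℝ) < x ⬝ᵥ (f 0) *ᵥ x := hpos0
      _ ≤ ∑' k, x ⬝ᵥ (f k) *ᵥ x := hx2.le_tsum 0 fun i _ => hnonneg i
  -- the Lyapunov equation
  have heq1 : 𝒜ᵀ * P * 𝒜 = ∑' k, f (k + 1) := by
    let L2 : Matrix (Fin n) (Fin n) ℝ →ₗ[ℝ] Matrix (Fin n) (Fin n) ℝ :=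
      { toFun := fun X => 𝒜ᵀ * X * 𝒜
        map_add' := fun M N => by noncomm_ring
        map_smul' := fun c M => by simp [Matrix.mul_smul, Matrix.smul_mul] }
    let L2' := L2.toContinuousLinearMap
    have h := L2'.map_tsum hsum
    have h2 : ∀ k, L2' (f k) = f (k + 1) := by
      intro k
      show 𝒜ᵀ * ((𝒜ᵀ) ^ k * Q * 𝒜 ^ k) * 𝒜 = (𝒜ᵀ) ^ (k + 1) * Q * 𝒜 ^ (k + 1)
      rw [pow_succ 𝒜 k, pow_succ' (𝒜ᵀ) k]
      noncomm_ring
    calc 𝒜ᵀ * P * 𝒜 = L2' P := rfl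
      _ = ∑' k, L2' (f k) := h
      _ = ∑' k, f (k + 1) := tsum_congr h2
  have heq2 : P = Q + ∑' k, f (k + 1) := by
    have h0 := hsum.tsum_eq_zero_add
    have hf0 : f 0 = Q := by simp [hf]
    rw [hP, h0, hf0]
  have hfinal : 𝒜ᵀ * P * 𝒜 - P + Q = 0 := by
    rw [heq1, heq2]; abel
  -- uniqueness
  have huniq : ∀ y : Matrix (Fin n) (Fin n) ℝ,
      (y.PosDef ∧ 𝒜ᵀ * y * 𝒜 - y + Q = 0) → y = P := by
    intro y hy
    have h1' : 𝒜ᵀ * y * 𝒜 = y - Q := by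
      rw [← sub_eq_zero, ← hy.2]; abel
    have h2' : 𝒜ᵀ * P * 𝒜 = P - Q := by
      rw [← sub_eq_zero, ← hfinal]; abel
    have hDrec : 𝒜ᵀ * (y - P) * 𝒜 = y - P := by
      calc 𝒜ᵀ * (y - P) * 𝒜 = 𝒜ᵀ * y * 𝒜 - 𝒜ᵀ * P * 𝒜 := by noncomm_ring
        _ = y - P := by rw [h1', h2']; abel
    have hconst : ∀ k : ℕ, (𝒜ᵀ) ^ k * (y - P) * 𝒜 ^ k = y - P := by
      intro k
      induction k with
      | zero => simp
      | succ k ih =>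
        have hstep : (𝒜ᵀ) ^ (k + 1) * (y - P) * 𝒜 ^ (k + 1)
            = (𝒜ᵀ) ^ k * (𝒜ᵀ * (y - P) * 𝒜) * 𝒜 ^ k := by
          rw [pow_succ (𝒜ᵀ) k, pow_succ' 𝒜 k]
          noncomm_ring
        rw [hstep, hDrec, ih]
    have ht := schur_tendsto_zero 𝒜 hA (y - P)
    have hfe : (fun k : ℕ => (𝒜ᵀ) ^ k * (y - P) * 𝒜 ^ k) = fun _ => y - P :=
      funext hconst
    rw [hfe] at ht
    exact sub_eq_zero.mp (tendsto_nhds_unique ht tendsto_const_nhds).symm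
  exact ⟨⟨P, ⟨hPos, hfinal⟩, huniq⟩, hsum, hPos, hfinal⟩
end

section
/- Consider the discrete-time system e^{(t+1)} = g(e^{(t)}, x^{(t)}) on ℝⁿ with input sequence (x^{(t)}) in ℝⁿ, where g is continuous with g(0,0) = 0. Suppose there exists a continuous ISS-Lyapunov function for this system, i.e., a continuous V: ℝⁿ → ℝ≥0, class-K∞ functions α₁, α₂, α₃ and a class-K function γ₀ such that α₁(‖e‖) ≤ V(e) ≤ α₂(‖e‖) for all e ∈ ℝⁿ and V(g(e,x)) − V(e) ≤ −α₃(‖e‖) + γ₀(‖x‖) for all e, x ∈ ℝⁿ. Then the system is input-to-state stable: there exist a class-KL function β and a class-K function γ such that for every initial condition e^{(0)} = η ∈ ℝⁿ and every bounded input sequence (x^{(s)}), the solution satisfies ‖e^{(t)}‖ ≤ β(‖η‖, t) + γ(sup_{0 ≤ s < t} ‖x^{(s)}‖) for all t ∈ ℕ. -/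
open Filter Topology

noncomputable def extK (α : ℝ → ℝ) : ℝ → ℝ := fun r => if r ≤ 0 then r else α (max r 0)

lemma extK_eq {α : ℝ → ℝ} (h0 : α 0 = 0) {r : ℝ} (hr : 0 ≤ r) : extK α r = α r := by
  unfold extK
  rcases lt_or_eq_of_le hr with h | h
  · rw [if_neg (not_le.2 h), max_eq_left hr]
  · simp [← h, h0]

lemma extK_continuous {α : ℝ → ℝ} (h : IsClassK α) : Continuous (extK α) := by
  have hc : Continuous fun r : ℝ => α (max r 0) :=
    h.1.comp_continuous (continuous_id.max continuous_const) fun x => Set.mem_Ici.2 (le_max_right _ _)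
  exact continuous_id.if_le hc continuous_id continuous_const
    (by intro a ha; simp [ha, h.2.2.1])

lemma extK_strictMono {α : ℝ → ℝ} (h : IsClassK α) : StrictMono (extK α) := by
  intro a b hab
  unfold extK
  rcases le_or_gt a 0 with ha | ha
  · rw [if_pos ha]
    rcases le_or_gt b 0 with hb | hb
    · rw [if_pos hb]; exact hab
    · rw [if_neg (not_le.2 hb), max_eq_left hb.le]
      calc a ≤ 0 := ha
        _ = α 0 := h.2.2.1.symm
        _ < α b := h.2.1 (Set.mem_Ici.2 le_rfl) hb.le hb
  · rw [if_neg (not_le.2 ha), if_neg (not_le.2 (ha.trans hab)),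
      max_eq_left ha.le, max_eq_left (ha.trans hab).le]
    exact h.2.1 ha.le (ha.trans hab).le hab

lemma extK_nonneg {α : ℝ → ℝ} (h : IsClassK α) {r : ℝ} (hr : 0 ≤ r) : 0 ≤ extK α r := by
  rw [extK_eq h.2.2.1 hr]; exact h.2.2.2 r hr

lemma extK_surj {α : ℝ → ℝ} (h : IsClassKInf α) : Function.Surjective (extK α) := by
  apply (extK_continuous h.1).surjective
  · apply h.2.congr'
    filter_upwards [eventually_ge_atTop (0:ℝ)] with r hr
    exact (extK_eq h.1.2.2.1 hr).symm
  · apply tendsto_atBot_mono' _ _ tendsto_id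
    filter_upwards [eventually_le_atBot (0:ℝ)] with r hr
    simp [extK, hr]

noncomputable def isoK (α : ℝ → ℝ) (h : IsClassKInf α) : ℝ ≃o ℝ :=
  StrictMono.orderIsoOfSurjective (extK α) (extK_strictMono h.1) (extK_surj h)

lemma isoK_apply {α : ℝ → ℝ} (h : IsClassKInf α) {r : ℝ} (hr : 0 ≤ r) :
    isoK α h r = α r := extK_eq h.1.2.2.1 hr

lemma isoK_zero {α : ℝ → ℝ} (h : IsClassKInf α) : isoK α h 0 = 0 := by
  rw [isoK_apply h le_rfl, h.1.2.2.1]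

lemma isoK_symm_zero {α : ℝ → ℝ} (h : IsClassKInf α) : (isoK α h).symm 0 = 0 := by
  exact (isoK α h).symm_apply_eq.2 (isoK_zero h).symm

lemma isoK_symm_nonneg {α : ℝ → ℝ} (h : IsClassKInf α) {r : ℝ} (hr : 0 ≤ r) :
    0 ≤ (isoK α h).symm r := by
  rw [← isoK_symm_zero h]; exact ((isoK α h).symm.monotone hr)

lemma isoK_cont {α : ℝ → ℝ} (h : IsClassKInf α) : Continuous (isoK α h) :=
  (isoK α h).continuous

lemma isoK_symm_cont {α : ℝ → ℝ} (h : IsClassKInf α) : Continuous (isoK α h).symm :=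
  (isoK α h).symm.continuous


section rhat
variable (m : ℝ → ℝ)

noncomputable def rhat (v : ℝ) : ℝ := sInf ((fun w => m w + (v - w)) '' Set.Icc 0 (max v 0))

variable {m} (hm : Continuous m) (hsm : StrictMono m) (h0 : m 0 = 0)
include hsm h0

lemma rhat_bddBelow (v : ℝ) : BddBelow ((fun w => m w + (v - w)) '' Set.Icc 0 (max v 0)) := by
  refine ⟨min v 0, ?_⟩
  rintro y ⟨w, ⟨hw0, hwm⟩, rfl⟩
  dsimp only
  have h1 : 0 ≤ m w := h0 ▸ hsm.monotone hw0
  rcases le_total v 0 with h | h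
  · have hw : w ≤ 0 := by simpa [max_eq_right h] using hwm
    have : w = 0 := le_antisymm hw hw0
    simp only [min_eq_left h, this]
    linarith
  · have hwv : w ≤ v := by simpa [max_eq_left h] using hwm
    simp only [min_eq_right h]
    linarith

lemma rhat_le {v w : ℝ} (hw : w ∈ Set.Icc 0 (max v 0)) : rhat m v ≤ m w + (v - w) :=
  csInf_le (rhat_bddBelow hsm h0 v) ⟨w, hw, rfl⟩

omit hsm h0 in
lemma le_rhat {v c : ℝ} (h : ∀ w ∈ Set.Icc 0 (max v 0), c ≤ m w + (v - w)) : c ≤ rhat m v :=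
  le_csInf (by
    refine ⟨m 0 + (v - 0), ⟨0, ?_, rfl⟩⟩
    exact ⟨le_rfl, le_max_right _ _⟩) (by rintro y ⟨w, hw, rfl⟩; exact h w hw)

lemma rhat_mono {v v' : ℝ} (hvv : v ≤ v') : rhat m v ≤ rhat m v' := by
  apply le_rhat
  intro w hw
  rcases le_or_gt w (max v 0) with h | h
  · have := rhat_le hsm h0 (v := v) (w := w) ⟨hw.1, h⟩
    linarith
  · have hv0 : max v 0 ∈ Set.Icc (0:ℝ) (max v 0) := ⟨le_max_right _ _, le_rfl⟩
    have h1 := rhat_le hsm h0 (v := v) hv0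
    have hw0 : (0:ℝ) < w := lt_of_le_of_lt (le_max_right v 0) h
    have hwv' : w ≤ v' := by
      rcases le_total v' 0 with hv' | hv'
      · have := hw.2; rw [max_eq_right hv'] at this; linarith
      · have := hw.2; rwa [max_eq_left hv'] at this
    have h2 : m (max v 0) ≤ m w := hsm.monotone h.le
    have h3 : v - max v 0 ≤ 0 := sub_nonpos.2 (le_max_left _ _)
    linarith

lemma rhat_lip {v v' : ℝ} (hvv : v ≤ v') : rhat m v' ≤ rhat m v + (v' - v) := by
  have : rhat m v' - (v' - v) ≤ rhat m v := by
    apply le_rhat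
    intro w hw
    have hw' : w ∈ Set.Icc 0 (max v' 0) := ⟨hw.1, hw.2.trans (max_le_max hvv le_rfl)⟩
    have := rhat_le hsm h0 (v := v') hw'
    linarith
  linarith

omit hsm in
lemma rhat_zero : rhat m 0 = 0 := by
  rw [rhat, max_self, Set.Icc_self]
  simp [h0]

lemma rhat_le_m {v : ℝ} (hv : 0 ≤ v) : rhat m v ≤ m v := by
  have := rhat_le hsm h0 (v := v) (w := v) ⟨hv, le_max_left _ _⟩
  linarith

lemma rhat_nonneg {v : ℝ} (hv : 0 ≤ v) : 0 ≤ rhat m v := by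
  have := rhat_mono hsm h0 (le_refl 0 |>.trans hv)
  rwa [rhat_zero h0] at this

lemma rhat_pos (hm : Continuous m) {v : ℝ} (hv : 0 < v) : 0 < rhat m v := by
  have hmax : max v 0 = v := max_eq_left hv.le
  have hcpt : IsCompact (Set.Icc (0:ℝ) (max v 0)) := isCompact_Icc
  have hne : (Set.Icc (0:ℝ) (max v 0)).Nonempty := ⟨0, le_rfl, le_max_right _ _⟩
  obtain ⟨w₀, hw₀, hmin⟩ := hcpt.exists_isMinOn hne
    ((hm.add (continuous_const.sub continuous_id)).continuousOn)
  have heq : rhat m v = m w₀ + (v - w₀) := by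
    apply le_antisymm (rhat_le hsm h0 hw₀)
    apply le_rhat
    intro w hw
    exact hmin hw
  rw [heq]
  rcases eq_or_lt_of_le hw₀.1 with h | h
  · rw [← h]; simpa [h0] using hv
  · have h1 : 0 < m w₀ := h0 ▸ hsm h
    have h2 : w₀ ≤ v := by rw [hmax] at hw₀; exact hw₀.2
    linarith

lemma rhat_continuous : Continuous (rhat m) := by
  have : LipschitzWith 1 (rhat m) := by
    apply LipschitzWith.of_dist_le_mul
    intro x y
    rw [Real.dist_eq, Real.dist_eq, NNReal.coe_one, one_mul]
    rcases le_total x y with h | h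
    · have h1 := rhat_mono hsm h0 h
      have h2 := rhat_lip hsm h0 h
      rw [abs_sub_comm (rhat m x), abs_of_nonneg (by linarith), abs_sub_comm x,
        abs_of_nonneg (by linarith)]
      linarith
    · have h1 := rhat_mono hsm h0 h
      have h2 := rhat_lip hsm h0 h
      rw [abs_of_nonneg (by linarith), abs_of_nonneg (by linarith)]
      linarith
  exact this.continuous

end rhat


noncomputable def interp (a : ℕ → ℝ) (t : ℝ) : ℝ :=
  a ⌊t⌋₊ + (t - ⌊t⌋₊) * (a (⌊t⌋₊ + 1) - a ⌊t⌋₊)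

lemma interp_natCast (a : ℕ → ℝ) (n : ℕ) : interp a n = a n := by
  simp [interp]

lemma interp_eq_on {a : ℕ → ℝ} {n : ℕ} {t : ℝ} (h1 : (n:ℝ) ≤ t) (h2 : t ≤ n + 1) :
    interp a t = a n + (t - n) * (a (n + 1) - a n) := by
  rcases eq_or_lt_of_le h2 with h | h
  · have : t = ((n + 1 : ℕ) : ℝ) := by push_cast; linarith
    rw [this, interp_natCast]
    push_cast
    ring
  · have hfl : ⌊t⌋₊ = n := by
      rw [Nat.floor_eq_iff (le_trans (Nat.cast_nonneg n) h1)]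
      exact ⟨h1, h⟩
    rw [interp, hfl]

lemma interp_strip_antitone {a : ℕ → ℝ} (ha : ∀ n, a (n + 1) ≤ a n) {n : ℕ} {t t' : ℝ}
    (h1 : (n:ℝ) ≤ t) (h2 : t ≤ t') (h3 : t' ≤ n + 1) : interp a t' ≤ interp a t := by
  rw [interp_eq_on h1 (h2.trans h3), interp_eq_on (h1.trans h2) h3]
  have hd : a (n + 1) - a n ≤ 0 := by linarith [ha n]
  have := mul_le_mul_of_nonpos_right (show t - (n:ℝ) ≤ t' - n by linarith) hd
  linarith

lemma interp_antitoneOn {a : ℕ → ℝ} (ha : ∀ n, a (n + 1) ≤ a n) :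
    AntitoneOn (interp a) (Set.Ici 0) := by
  have key : ∀ k : ℕ, ∀ t t' : ℝ, 0 ≤ t → t ≤ t' → t' ≤ k → interp a t' ≤ interp a t := by
    intro k
    induction k with
    | zero =>
      intro t t' ht htt' ht'
      have h1 : t = 0 := le_antisymm (htt'.trans (by exact_mod_cast ht')) ht
      have h2 : t' = 0 := le_antisymm (by exact_mod_cast ht') (ht.trans htt')
      rw [h1, h2]
    | succ k ih =>
      intro t t' ht htt' ht'
      rcases le_or_gt t' k with h | h
      · exact ih t t' ht htt' h
      · rcases le_or_gt (k:ℝ) t with h2 | h2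
        · exact interp_strip_antitone ha h2 htt' (by exact_mod_cast ht')
        · calc interp a t' ≤ interp a k :=
              interp_strip_antitone ha le_rfl h.le (by exact_mod_cast ht')
            _ ≤ interp a t := ih t k ht h2.le le_rfl
  intro t ht t' ht' htt'
  exact key ⌈t'⌉₊ t t' ht htt' (Nat.le_ceil t')

lemma interp_bounds {a : ℕ → ℝ} (ha : ∀ n, a (n + 1) ≤ a n) {t : ℝ} (ht : 0 ≤ t) :
    a (⌊t⌋₊ + 1) ≤ interp a t ∧ interp a t ≤ a ⌊t⌋₊ := by
  set n := ⌊t⌋₊ with hn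
  have hu0 : 0 ≤ t - n := sub_nonneg.2 (Nat.floor_le ht)
  have hu1 : t - n ≤ 1 := by
    have := Nat.lt_floor_add_one t
    push_cast at this ⊢
    linarith
  have hd : a (n + 1) - a n ≤ 0 := by linarith [ha n]
  constructor
  · rw [interp, ← hn]
    nlinarith
  · rw [interp, ← hn]
    nlinarith

lemma interp_tendsto {a : ℕ → ℝ} (ha : ∀ n, a (n + 1) ≤ a n)
    (hlim : Tendsto a atTop (𝓝 0)) : Tendsto (interp a) atTop (𝓝 0) := by
  have hfl : Tendsto (fun t : ℝ => ⌊t⌋₊) atTop atTop := tendsto_nat_floor_atTop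
  have h1 : Tendsto (fun t : ℝ => a ⌊t⌋₊) atTop (𝓝 0) := hlim.comp hfl
  have h2 : Tendsto (fun t : ℝ => a (⌊t⌋₊ + 1)) atTop (𝓝 0) :=
    hlim.comp ((tendsto_add_atTop_nat 1).comp hfl)
  apply tendsto_of_tendsto_of_tendsto_of_le_of_le' h2 h1
  · filter_upwards [eventually_ge_atTop (0:ℝ)] with t ht
    exact (interp_bounds ha ht).1
  · filter_upwards [eventually_ge_atTop (0:ℝ)] with t ht
    exact (interp_bounds ha ht).2

lemma interp_continuousOn (a : ℕ → ℝ → ℝ) (hc : ∀ n, Continuous (a n)) :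
    ContinuousOn (fun p : ℝ × ℝ => interp (fun n => a n p.1) p.2)
      (Set.univ ×ˢ Set.Ici 0) := by
  have hcover : (Set.univ ×ˢ Set.Ici (0:ℝ) : Set (ℝ × ℝ)) ⊆
      ⋃ n : ℕ, Set.univ ×ˢ Set.Icc (n:ℝ) (n + 1) := by
    rintro ⟨r, t⟩ ⟨-, ht⟩
    refine Set.mem_iUnion.2 ⟨⌊t⌋₊, Set.mem_prod.2 ⟨Set.mem_univ r, ?_⟩⟩
    exact ⟨Nat.floor_le ht, (Nat.lt_floor_add_one t).le⟩
  apply ContinuousOn.mono _ hcover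
  apply LocallyFinite.continuousOn_iUnion
  · intro p
    refine ⟨Set.univ ×ˢ Set.Ioo (p.2 - 1) (p.2 + 1),
      prod_mem_nhds Filter.univ_mem (Ioo_mem_nhds (by linarith) (by linarith)), ?_⟩
    apply Set.Finite.subset (Set.finite_le_nat ⌈p.2 + 1⌉₊)
    rintro n ⟨q, hq1, hq2⟩
    have hA : (n:ℝ) ≤ q.2 := (Set.mem_prod.1 hq1).2.1
    have hB : q.2 < p.2 + 1 := (Set.mem_prod.1 hq2).2.2
    have : (n:ℝ) ≤ (⌈p.2 + 1⌉₊ : ℝ) := le_trans (by linarith) (Nat.le_ceil _)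
    exact_mod_cast this
  · intro n
    exact isClosed_univ.prod isClosed_Icc
  · intro n
    have hg : Continuous fun p : ℝ × ℝ =>
        a n p.1 + (p.2 - (n:ℝ)) * (a (n + 1) p.1 - a n p.1) := by
      apply Continuous.add ((hc n).comp continuous_fst)
      exact ((continuous_snd.sub continuous_const).mul
        (((hc (n + 1)).comp continuous_fst).sub ((hc n).comp continuous_fst)))
    apply (hg.continuousOn).congr
    rintro ⟨r, t⟩ ⟨-, ht1, ht2⟩
    exact interp_eq_on ht1 ht2


/-- If the system `e⁺ = g e x` on ℝⁿ (with `g` continuous, `g 0 0 = 0`)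
admits a continuous ISS-Lyapunov function `V` with class-K∞ bounds `α₁, α₂, α₃` and class-K
gain `γ₀`, then it is input-to-state stable: there are a class-KL `β` and class-K `γ` such
that every solution with bounded input satisfies
`‖e t‖ ≤ β ‖η‖ t + γ (sup_{0 ≤ s < t} ‖x s‖)`. -/
theorem ISS_lyapunov_implies_ISS {n : ℕ}
    (g : EuclideanSpace ℝ (Fin n) → EuclideanSpace ℝ (Fin n) → EuclideanSpace ℝ (Fin n))
    (hg : Continuous fun p : EuclideanSpace ℝ (Fin n) × EuclideanSpace ℝ (Fin n) =>
      g p.1 p.2)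
    (hg0 : g 0 0 = 0)
    (V : EuclideanSpace ℝ (Fin n) → ℝ) (hV : Continuous V) (hVnonneg : ∀ e, 0 ≤ V e)
    (α₁ α₂ α₃ γ₀ : ℝ → ℝ)
    (hα₁ : IsClassKInf α₁) (hα₂ : IsClassKInf α₂) (hα₃ : IsClassKInf α₃)
    (hγ₀ : IsClassK γ₀)
    (hbound : ∀ e : EuclideanSpace ℝ (Fin n), α₁ ‖e‖ ≤ V e ∧ V e ≤ α₂ ‖e‖)
    (hdecr : ∀ e x : EuclideanSpace ℝ (Fin n), V (g e x) - V e ≤ -α₃ ‖e‖ + γ₀ ‖x‖) :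
    ∃ β : ℝ → ℝ → ℝ, ∃ γ : ℝ → ℝ, IsClassKL β ∧ IsClassK γ ∧
      ∀ (η : EuclideanSpace ℝ (Fin n)) (x e : ℕ → EuclideanSpace ℝ (Fin n)),
        e 0 = η → (∀ t, e (t + 1) = g (e t) (x t)) → (∃ M : ℝ, ∀ s, ‖x s‖ ≤ M) →
        ∀ t : ℕ, ‖e t‖ ≤ β ‖η‖ t + γ (⨆ s : Fin t, ‖x s‖) := by
  classical
  set E1 := isoK α₁ hα₁ with hE1def
  set E2 := isoK α₂ hα₂ with hE2def
  set E3 := isoK α₃ hα₃ with hE3def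
  -- the function ρ = α₃ ∘ α₂⁻¹ (globally extended)
  set ρ : ℝ → ℝ := fun v => E3 (E2.symm v) with hρdef
  have hρ_sm : StrictMono ρ := fun a b hab => E3.strictMono (E2.symm.strictMono hab)
  have hρ0 : ρ 0 = 0 := by
    simp only [hρdef, hE2def, hE3def, isoK_symm_zero hα₂, isoK_zero hα₃]
  set m : ℝ → ℝ := fun v => min (ρ v) v with hmdef
  have hm_sm : StrictMono m := fun a b hab => min_lt_min (hρ_sm hab) hab
  have hm_cont : Continuous m :=
    ((isoK_cont hα₃).comp (isoK_symm_cont hα₂)).min continuous_id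
  have hm0 : m 0 = 0 := by simp [hmdef, hρ0]
  have hm_le : ∀ v, m v ≤ ρ v := fun v => min_le_left _ _
  have hm_le' : ∀ v, m v ≤ v := fun v => min_le_right _ _
  -- the contraction ψ
  set ψ : ℝ → ℝ := fun v => v - rhat m v / 2 with hψdef
  have hψ_cont : Continuous ψ := continuous_id.sub ((rhat_continuous hm_sm hm0).div_const 2)
  have hψ_sm : StrictMono ψ := by
    intro a b hab
    have h1 := rhat_lip hm_sm hm0 hab.le
    simp only [hψdef]
    linarith
  have hψ0 : ψ 0 = 0 := by simp [hψdef, rhat_zero hm0]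
  have hψ_le : ∀ v, 0 ≤ v → ψ v ≤ v := by
    intro v hv
    have := rhat_nonneg hm_sm hm0 hv
    simp only [hψdef]
    linarith
  have hψ_lt : ∀ v, 0 < v → ψ v < v := by
    intro v hv
    have := rhat_pos hm_sm hm0 hm_cont hv
    simp only [hψdef]
    linarith
  have hψ_nonneg : ∀ v, 0 ≤ v → 0 ≤ ψ v := by
    intro v hv
    have h1 := rhat_le_m hm_sm hm0 hv
    have h2 := hm_le' v
    simp only [hψdef]
    linarith
  have hψ_key : ∀ v, 0 ≤ v → v - ρ v / 2 ≤ ψ v := by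
    intro v hv
    have h1 := rhat_le_m hm_sm hm0 hv
    have h2 := hm_le v
    simp only [hψdef]
    linarith
  -- iterates of ψ
  set F : ℕ → ℝ → ℝ := fun k => ψ^[k] with hFdef
  have hF_cont : ∀ k, Continuous (F k) := fun k => hψ_cont.iterate k
  have hF_sm : ∀ k, StrictMono (F k) := fun k => hψ_sm.iterate k
  have hF0 : ∀ k, F k 0 = 0 := fun k => Function.iterate_fixed hψ0 k
  have hF_succ : ∀ k v, F (k + 1) v = ψ (F k v) := fun k v =>
    Function.iterate_succ_apply' ψ k v
  have hF_nonneg : ∀ k v, 0 ≤ v → 0 ≤ F k v := by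
    intro k
    induction k with
    | zero => intro v hv; simpa [hFdef] using hv
    | succ k ih =>
      intro v hv
      rw [hF_succ]
      exact hψ_nonneg _ (ih v hv)
  have hF_anti : ∀ k v, 0 ≤ v → F (k + 1) v ≤ F k v := by
    intro k v hv
    rw [hF_succ]
    exact hψ_le _ (hF_nonneg k v hv)
  have hF_tendsto : ∀ v, 0 ≤ v → Tendsto (fun k => F k v) atTop (𝓝 0) := by
    intro v hv
    have hanti : Antitone fun k => F k v := antitone_nat_of_succ_le fun k => hF_anti k v hv
    have hbdd : BddBelow (Set.range fun k => F k v) :=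
      ⟨0, by rintro y ⟨k, rfl⟩; exact hF_nonneg k v hv⟩
    have hlim := tendsto_atTop_ciInf hanti hbdd
    set L := ⨅ k, F k v with hLdef
    have hL0 : 0 ≤ L := le_ciInf fun k => hF_nonneg k v hv
    have hfix : ψ L = L := by
      have h1 : Tendsto (fun k => F (k + 1) v) atTop (𝓝 L) :=
        hlim.comp (tendsto_add_atTop_nat 1)
      have h2 : Tendsto (fun k => ψ (F k v)) atTop (𝓝 (ψ L)) :=
        (hψ_cont.tendsto L).comp hlim
      have h3 : (fun k => F (k + 1) v) = fun k => ψ (F k v) := by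
        funext k; exact hF_succ k v
      rw [h3] at h1
      exact tendsto_nhds_unique h2 h1
    have hLz : L = 0 := by
      by_contra hne
      have hLpos : 0 < L := lt_of_le_of_ne hL0 (Ne.symm hne)
      exact absurd hfix (ne_of_lt (hψ_lt L hLpos))
    rwa [hLz] at hlim
  -- the KL function β and gain γ
  set a : ℕ → ℝ → ℝ := fun k r => F k (E2 r) with hadef
  have ha_cont : ∀ k, Continuous (a k) := fun k => (hF_cont k).comp (isoK_cont hα₂)
  have ha_anti : ∀ r, 0 ≤ r → ∀ k, a (k + 1) r ≤ a k r := by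
    intro r hr k
    exact hF_anti k (E2 r) (by rw [hE2def, isoK_apply hα₂ hr]; exact hα₂.1.2.2.2 r hr)
  have hE2r_nonneg : ∀ r : ℝ, 0 ≤ r → 0 ≤ E2 r := by
    intro r hr
    rw [hE2def, isoK_apply hα₂ hr]
    exact hα₂.1.2.2.2 r hr
  set β : ℝ → ℝ → ℝ := fun r t => E1.symm (interp (fun k => a k r) t) + r * Real.exp (-t)
    with hβdef
  set γ : ℝ → ℝ := fun u => E1.symm (E2 (E3.symm (2 * γ₀ u)) + γ₀ u) with hγdef
  refine ⟨β, γ, ?_, ?_, ?_⟩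
  · -- IsClassKL β
    have hGmono : ∀ t : ℝ, 0 ≤ t → Monotone fun r => interp (fun k => a k r) t := by
      intro t ht r r' hrr'
      show interp (fun k => a k r) t ≤ interp (fun k => a k r') t
      have h1 : (⌊t⌋₊ : ℝ) ≤ t := Nat.floor_le ht
      have h2 : t ≤ (⌊t⌋₊ : ℝ) + 1 := (Nat.lt_floor_add_one t).le
      rw [interp_eq_on h1 h2, interp_eq_on h1 h2]
      set k := ⌊t⌋₊
      have hu0 : 0 ≤ t - (k : ℝ) := by linarith
      have hu1 : t - (k : ℝ) ≤ 1 := by linarith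
      have hak : a k r ≤ a k r' := ((hF_sm k).comp E2.strictMono).monotone hrr'
      have hak1 : a (k + 1) r ≤ a (k + 1) r' :=
        ((hF_sm (k + 1)).comp E2.strictMono).monotone hrr'
      nlinarith
    refine ⟨?_, ?_, ?_, ?_⟩
    · -- joint continuity
      have h1 : ContinuousOn (fun p : ℝ × ℝ => interp (fun k => a k p.1) p.2)
          (Set.Ici 0 ×ˢ Set.Ici 0) :=
        (interp_continuousOn a ha_cont).mono
          (Set.prod_mono (Set.subset_univ _) le_rfl)
      have h2 : ContinuousOn (fun p : ℝ × ℝ => E1.symm (interp (fun k => a k p.1) p.2))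
          (Set.Ici 0 ×ˢ Set.Ici 0) := (isoK_symm_cont hα₁).comp_continuousOn h1
      have h3 : Continuous fun p : ℝ × ℝ => p.1 * Real.exp (-p.2) :=
        continuous_fst.mul (Real.continuous_exp.comp continuous_snd.neg)
      exact h2.add h3.continuousOn
    · -- class K in r for each t ≥ 0
      intro t ht
      have hsm : StrictMono fun r => β r t := by
        intro r r' hrr'
        have h1 : E1.symm (interp (fun k => a k r) t) ≤
            E1.symm (interp (fun k => a k r') t) :=
          E1.symm.monotone (hGmono t ht hrr'.le)
        have h2 : r * Real.exp (-t) < r' * Real.exp (-t) :=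
          mul_lt_mul_of_pos_right hrr' (Real.exp_pos _)
        simp only [hβdef]
        linarith
      refine ⟨?_, hsm.strictMonoOn _, ?_, ?_⟩
      · have hc : Continuous fun r => β r t := by
          have : Continuous fun r => interp (fun k => a k r) t := by
            have h1 : (fun r => interp (fun k => a k r) t) = fun r =>
                a ⌊t⌋₊ r + (t - ⌊t⌋₊) * (a (⌊t⌋₊ + 1) r - a ⌊t⌋₊ r) := by
              funext r; rfl
            rw [h1]
            exact (ha_cont _).add
              (continuous_const.mul ((ha_cont _).sub (ha_cont _)))
          exact (((isoK_symm_cont hα₁).comp this).add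
            (continuous_id.mul continuous_const))
        exact hc.continuousOn
      · have hz : (fun k : ℕ => a k 0) = fun _ => (0:ℝ) := by
          funext k
          show F k (E2 0) = 0
          rw [hE2def, isoK_zero hα₂, hF0]
        show E1.symm (interp (fun k => a k 0) t) + 0 * Real.exp (-t) = 0
        rw [hz]
        have hi : interp (fun _ : ℕ => (0:ℝ)) t = 0 := by simp [interp]
        rw [hi, zero_mul, add_zero]
        exact isoK_symm_zero hα₁
      · intro r hr
        have h1 : 0 ≤ interp (fun k => a k r) t := by
          have := (interp_bounds (a := fun k => a k r) (ha_anti r hr) ht).1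
          have h2 : 0 ≤ a (⌊t⌋₊ + 1) r := hF_nonneg _ _ (hE2r_nonneg r hr)
          linarith
        have h2 : 0 ≤ E1.symm (interp (fun k => a k r) t) := by
          rw [← isoK_symm_zero hα₁]
          exact E1.symm.monotone h1
        have h3 : 0 ≤ r * Real.exp (-t) := mul_nonneg hr (Real.exp_pos _).le
        simp only [hβdef]
        linarith
    · -- antitone in t
      intro r hr
      intro t ht t' ht' htt'
      have h1 := interp_antitoneOn (a := fun k => a k r) (ha_anti r hr) ht ht' htt'
      have h2 : E1.symm (interp (fun k => a k r) t') ≤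
          E1.symm (interp (fun k => a k r) t) := E1.symm.monotone h1
      have h3 : r * Real.exp (-t') ≤ r * Real.exp (-t) :=
        mul_le_mul_of_nonneg_left (Real.exp_le_exp.2 (by linarith)) hr
      simp only [hβdef]
      linarith
    · -- tendsto 0
      intro r hr
      have h1 : Tendsto (interp fun k => a k r) atTop (𝓝 0) :=
        interp_tendsto (a := fun k => a k r) (ha_anti r hr) (hF_tendsto (E2 r) (hE2r_nonneg r hr))
      have h2 : Tendsto (fun t => E1.symm (interp (fun k => a k r) t)) atTop (𝓝 0) := by
        have := ((isoK_symm_cont hα₁).tendsto 0).comp h1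
        rwa [isoK_symm_zero hα₁] at this
      have h3 : Tendsto (fun t : ℝ => r * Real.exp (-t)) atTop (𝓝 0) := by
        simpa using (Real.tendsto_exp_neg_atTop_nhds_zero.const_mul r)
      simpa using h2.add h3
  · -- IsClassK γ
    have hγz : γ 0 = 0 := by
      simp only [hγdef, hE1def, hE2def, hE3def, hγ₀.2.2.1, mul_zero, isoK_symm_zero hα₃, isoK_zero hα₂, add_zero,
        isoK_symm_zero hα₁]
    have hinner_nonneg : ∀ u, 0 ≤ u → 0 ≤ E2 (E3.symm (2 * γ₀ u)) + γ₀ u := by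
      intro u hu
      have h1 : 0 ≤ γ₀ u := hγ₀.2.2.2 u hu
      have h2 : 0 ≤ E3.symm (2 * γ₀ u) := isoK_symm_nonneg hα₃ (by linarith)
      have h3 : 0 ≤ E2 (E3.symm (2 * γ₀ u)) := hE2r_nonneg _ h2
      linarith
    refine ⟨?_, ?_, hγz, ?_⟩
    · have h1 : ContinuousOn (fun u => 2 * γ₀ u) (Set.Ici 0) :=
        (continuousOn_const.mul hγ₀.1)
      have h2 : ContinuousOn (fun u => E2 (E3.symm (2 * γ₀ u))) (Set.Ici 0) :=
        ((isoK_cont hα₂).comp (isoK_symm_cont hα₃)).comp_continuousOn h1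
      exact (isoK_symm_cont hα₁).comp_continuousOn (h2.add hγ₀.1)
    · intro u hu u' hu' huu'
      have h1 : γ₀ u < γ₀ u' := hγ₀.2.1 hu hu' huu'
      have h2 : E2 (E3.symm (2 * γ₀ u)) < E2 (E3.symm (2 * γ₀ u')) :=
        E2.strictMono (E3.symm.strictMono (by linarith))
      exact E1.symm.strictMono (by linarith)
    · intro u hu
      show 0 ≤ E1.symm (E2 (E3.symm (2 * γ₀ u)) + γ₀ u)
      rw [← isoK_symm_zero hα₁]
      exact E1.symm.monotone (hinner_nonneg u hu)
  · -- the trajectory estimate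
    intro η x e he0 hrec _hbdd t
    set u : ℕ → ℝ := fun k => ⨆ s : Fin k, ‖x s‖ with hudef
    have hu_nonneg : ∀ k, 0 ≤ u k := fun k => Real.iSup_nonneg fun s => norm_nonneg _
    have hbddA : ∀ k : ℕ, BddAbove (Set.range fun s : Fin k => ‖x s‖) := fun k =>
      (Set.finite_range _).bddAbove
    have hu_mono : ∀ k, u k ≤ u (k + 1) := by
      intro k
      rcases Nat.eq_zero_or_pos k with hk | hk
      · rw [hudef]
        subst hk
        simp only
        rw [Real.iSup_of_isEmpty]
        exact hu_nonneg 1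
      · have : Nonempty (Fin k) := ⟨⟨0, hk⟩⟩
        apply ciSup_le
        intro s
        exact le_ciSup (hbddA (k + 1)) (⟨s.1, s.2.trans (Nat.lt_succ_self k)⟩ : Fin (k + 1))
    have hxu : ∀ k, ‖x k‖ ≤ u (k + 1) := fun k =>
      le_ciSup (hbddA (k + 1)) (⟨k, Nat.lt_succ_self k⟩ : Fin (k + 1))
    set B : ℕ → ℝ := fun k => E2 (E3.symm (2 * γ₀ (u k))) + γ₀ (u k) with hBdef
    have hγ₀mono := hγ₀.2.1.monotoneOn
    have hB_nonneg : ∀ k, 0 ≤ B k := by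
      intro k
      have h1 : 0 ≤ γ₀ (u k) := hγ₀.2.2.2 _ (hu_nonneg k)
      have h2 : 0 ≤ E2 (E3.symm (2 * γ₀ (u k))) :=
        hE2r_nonneg _ (isoK_symm_nonneg hα₃ (by linarith))
      simp only [hBdef]
      linarith
    have hB_mono : ∀ k, B k ≤ B (k + 1) := by
      intro k
      have h1 : γ₀ (u k) ≤ γ₀ (u (k + 1)) :=
        hγ₀mono (hu_nonneg k) (hu_nonneg (k + 1)) (hu_mono k)
      have h2 : E2 (E3.symm (2 * γ₀ (u k))) ≤ E2 (E3.symm (2 * γ₀ (u (k + 1)))) :=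
        E2.monotone (E3.symm.monotone (by linarith))
      simp only [hBdef]
      linarith
    -- main induction
    have main : ∀ k, V (e k) ≤ max (F k (E2 ‖η‖)) (B k) := by
      intro k
      induction k with
      | zero =>
        rw [he0]
        refine le_trans ?_ (le_max_left _ _)
        have h1 : V η ≤ α₂ ‖η‖ := (hbound η).2
        have h2 : F 0 (E2 ‖η‖) = E2 ‖η‖ := rfl
        rw [h2, hE2def, isoK_apply hα₂ (norm_nonneg η)]
        exact h1
      | succ k ih =>
        set w := V (e k) with hwdef
        have hw0 : 0 ≤ w := hVnonneg _
        have hV1 : V (e (k + 1)) ≤ w - α₃ ‖e k‖ + γ₀ ‖x k‖ := by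
          rw [hrec k]
          have := hdecr (e k) (x k)
          linarith
        set c := γ₀ (u (k + 1)) with hcdef
        have hc_ge : γ₀ ‖x k‖ ≤ c :=
          hγ₀mono (norm_nonneg _) (hu_nonneg (k + 1)) (hxu k)
        have hc0 : 0 ≤ c := hγ₀.2.2.2 _ (hu_nonneg (k + 1))
        have hsymmw0 : 0 ≤ E2.symm w := isoK_symm_nonneg hα₂ hw0
        have hsymmw : E2.symm w ≤ ‖e k‖ := by
          rw [E2.symm_apply_le]
          calc w ≤ α₂ ‖e k‖ := (hbound (e k)).2
            _ = E2 ‖e k‖ := (isoK_apply hα₂ (norm_nonneg _)).symm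
        have hρw_le : ρ w ≤ α₃ ‖e k‖ := by
          have h1 : ρ w = α₃ (E2.symm w) := isoK_apply hα₃ hsymmw0
          rw [h1]
          exact hα₃.1.2.1.monotoneOn hsymmw0 (norm_nonneg _) hsymmw
        have hρw0 : 0 ≤ ρ w := by
          rw [← hρ0]
          exact hρ_sm.monotone hw0
        have hV2 : V (e (k + 1)) ≤ w - ρ w + c := by linarith
        by_cases hcase : 2 * c ≤ ρ w
        · have h1 : V (e (k + 1)) ≤ ψ w := by
            calc V (e (k + 1)) ≤ w - ρ w + c := hV2
              _ ≤ w - ρ w / 2 := by linarith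
              _ ≤ ψ w := hψ_key w hw0
          have h2 : ψ w ≤ ψ (max (F k (E2 ‖η‖)) (B k)) := hψ_sm.monotone ih
          rw [hψ_sm.monotone.map_max] at h2
          have h3 : ψ (F k (E2 ‖η‖)) = F (k + 1) (E2 ‖η‖) := (hF_succ k _).symm
          have h4 : ψ (B k) ≤ B (k + 1) := (hψ_le _ (hB_nonneg k)).trans (hB_mono k)
          calc V (e (k + 1)) ≤ max (ψ (F k (E2 ‖η‖))) (ψ (B k)) := h1.trans h2
            _ ≤ max (F (k + 1) (E2 ‖η‖)) (B (k + 1)) := by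
                rw [h3]; exact max_le_max le_rfl h4
        · push_neg at hcase
          have h1 : E2.symm w < E3.symm (2 * c) := by
            have : E3 (E2.symm w) < E3 (E3.symm (2 * c)) := by
              rw [E3.apply_symm_apply]
              exact hcase
            exact E3.lt_iff_lt.1 this
          have h2 : w < E2 (E3.symm (2 * c)) := by
            have := E2.strictMono h1
            rwa [E2.apply_symm_apply] at this
          have h3 : V (e (k + 1)) ≤ B (k + 1) := by
            simp only [hBdef, ← hcdef]
            linarith
          exact h3.trans (le_max_right _ _)
    -- conclude
    have hVt := main t
    have hE1e : E1 ‖e t‖ = α₁ ‖e t‖ := isoK_apply hα₁ (norm_nonneg _)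
    have hle : E1 ‖e t‖ ≤ max (F t (E2 ‖η‖)) (B t) := by
      rw [hE1e]; exact (hbound (e t)).1.trans hVt
    have hkey : ‖e t‖ ≤ max (E1.symm (F t (E2 ‖η‖))) (E1.symm (B t)) := by
      have h := E1.symm.monotone hle
      rwa [E1.symm_apply_apply, E1.symm.monotone.map_max] at h
    have hA0 : 0 ≤ E1.symm (F t (E2 ‖η‖)) :=
      isoK_symm_nonneg hα₁ (hF_nonneg t _ (hE2r_nonneg _ (norm_nonneg η)))
    have hB0 : 0 ≤ E1.symm (B t) := isoK_symm_nonneg hα₁ (hB_nonneg t)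
    have hsum : max (E1.symm (F t (E2 ‖η‖))) (E1.symm (B t)) ≤
        E1.symm (F t (E2 ‖η‖)) + E1.symm (B t) := max_le (by linarith) (by linarith)
    have hβge : E1.symm (F t (E2 ‖η‖)) ≤ β ‖η‖ (t : ℝ) := by
      have h1 : interp (fun k => a k ‖η‖) ((t : ℕ) : ℝ) = a t ‖η‖ := interp_natCast _ t
      have h2 : 0 ≤ ‖η‖ * Real.exp (-(t:ℝ)) :=
        mul_nonneg (norm_nonneg _) (Real.exp_pos _).le
      have h3 : a t ‖η‖ = F t (E2 ‖η‖) := rfl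
      simp only [hβdef, h1, h3]
      linarith
    have hγeq : E1.symm (B t) = γ (u t) := rfl
    calc ‖e t‖ ≤ max (E1.symm (F t (E2 ‖η‖))) (E1.symm (B t)) := hkey
      _ ≤ E1.symm (F t (E2 ‖η‖)) + E1.symm (B t) := hsum
      _ ≤ β ‖η‖ (t:ℝ) + γ (u t) := by rw [← hγeq]; exact add_le_add hβge le_rfl
end
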